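/- Every generalized Kracht formula α(x_0) is equivalent (in every Kripke frame, with atoms read via the # translation) to a first-order formula obtained from atoms x_l ∈ E, with E quasi-safe, using only conjunction, disjunction and restricted universal quantification. -/

import Mathlib

set_option autoImplicit true

universe u v w

/-- Modal formulas over modality indices `Λ` and propositional variables `V`. -/
inductive MF (Λ : Type u) (V : Type v) : Type (max u v)
  | var : V → MF Λ V
  | top : MF Λ V
  | bot : MF Λ V
  | and : MF Λ V → MF Λ V → MF Λ V
  | or  : MF Λ V → MF Λ V → MF Λ V
  | neg : MF Λ V → MF Λ V
  | imp : MF Λ V → MF Λ V → MF Λ V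
  | dia : Λ → MF Λ V → MF Λ V
  | box : Λ → MF Λ V → MF Λ V

namespace MF
variable {Λ : Type u} {V : Type v}

/-- The set of propositional variables occurring in a modal formula. -/
def vars : MF Λ V → Set V
  | var p => {p}
  | top => ∅
  | bot => ∅
  | and a b => vars a ∪ vars b
  | or a b => vars a ∪ vars b
  | neg a => vars a
  | imp a b => vars a ∪ vars b
  | dia _ a => vars a
  | box _ a => vars a

end MF

/-- Positive modal formulas: built without `¬` and `→`. -/
inductive Positive {Λ : Type u} {V : Type v} : MF Λ V → Prop
  | var (p : V) : Positive (.var p)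
  | top : Positive .top
  | bot : Positive .bot
  | and {a b} : Positive a → Positive b → Positive (.and a b)
  | or {a b} : Positive a → Positive b → Positive (.or a b)
  | dia (l) {a} : Positive a → Positive (.dia l a)
  | box (l) {a} : Positive a → Positive (.box l a)

/-- A Kripke frame with accessibility relations indexed by `Λ`. -/
structure Frame (Λ : Type u) where
  W : Type w
  R : Λ → W → W → Prop

/-- Kripke satisfaction `F, x, θ ⊨ φ`. -/
def sat {Λ : Type u} {V : Type v} (F : Frame Λ) (θ : V → Set F.W) : F.W → MF Λ V → Prop
  | x, .var p => x ∈ θ p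
  | _, .top => True
  | _, .bot => False
  | x, .and a b => sat F θ x a ∧ sat F θ x b
  | x, .or a b => sat F θ x a ∨ sat F θ x b
  | x, .neg a => ¬ sat F θ x a
  | x, .imp a b => sat F θ x a → sat F θ x b
  | x, .dia l a => ∃ y, F.R l x y ∧ sat F θ y a
  | x, .box l a => ∀ y, F.R l x y → sat F θ y a

/-- `BoxF φ p S`: `φ` is a box-formula with head `p`, in which the set of variables
occurring not as the head is `S`. -/
inductive BoxF {Λ : Type u} {V : Type v} : MF Λ V → V → Set V → Prop
  | var (p : V) : BoxF (.var p) p ∅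
  | imp {POS ψ p S} : Positive POS → BoxF ψ p S → BoxF (.imp POS ψ) p (MF.vars POS ∪ S)
  | box (l) {ψ p S} : BoxF ψ p S → BoxF (.box l ψ) p S

/-- `RegBF r φ p`: relative to the rank assignment `r`, `φ` is a regular box-formula
with head `p` (of rank `r p`): all variables of the positive antecedents have rank `< r p`. -/
inductive RegBF {Λ : Type u} {V : Type v} (r : V → ℕ) : MF Λ V → V → Prop
  | var (p : V) : RegBF r (.var p) p
  | imp {POS ψ p} : Positive POS → (∀ q ∈ MF.vars POS, r q < r p) →
      RegBF r ψ p → RegBF r (.imp POS ψ) p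
  | box (l) {ψ p} : RegBF r ψ p → RegBF r (.box l ψ) p

/-- The edge relation of the dependency graph of a set `A` of box-formulas:
`p → q` iff `p` occurs (not as the head) in some member of `A` with head `q`. -/
def depEdge {Λ : Type u} {V : Type v} (A : Set (MF Λ V)) (p q : V) : Prop :=
  ∃ φ ∈ A, ∃ S, BoxF φ q S ∧ p ∈ S

/-- A set of box-formulas is regular if its dependency graph has no oriented cycle. -/
def RegularSet {Λ : Type u} {V : Type v} (A : Set (MF Λ V)) : Prop :=
  ∀ p : V, ¬ Relation.TransGen (depEdge A) p p

/-- `R_λ^{-1}(A) = {u : ∃ v, u R_λ v ∧ v ∈ A}`. -/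
def Rinv {Λ : Type u} (F : Frame Λ) (l : Λ) (A : Set F.W) : Set F.W :=
  {u | ∃ v, F.R l u v ∧ v ∈ A}

/-- `R_λ^□(A) = {u : ∀ v, u R_λ v → v ∈ A}`. -/
def RboxOp {Λ : Type u} (F : Frame Λ) (l : Λ) (A : Set F.W) : Set F.W :=
  {u | ∀ v, F.R l u v → v ∈ A}

/-- `R_λ(A) = {u : ∃ v, v R_λ u ∧ v ∈ A}`. -/
def Rfwd {Λ : Type u} (F : Frame Λ) (l : Λ) (A : Set F.W) : Set F.W :=
  {u | ∃ v, F.R l v u ∧ v ∈ A}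

/-- The interpretation of the expression `KP^{POS}` in a frame `F`, the set variables
`P^l_i` being interpreted by `P`.  (Junk value `∅` on non-positive constructors.) -/
def KPsem {Λ : Type u} (F : Frame Λ) (P : ℕ × ℕ → Set F.W) : MF Λ (ℕ × ℕ) → Set F.W
  | .var q => P q
  | .top => Set.univ
  | .bot => ∅
  | .and a b => KPsem F P a ∩ KPsem F P b
  | .or a b => KPsem F P a ∪ KPsem F P b
  | .dia l a => Rinv F l (KPsem F P a)
  | .box l a => RboxOp F l (KPsem F P a)
  | .neg _ => ∅
  | .imp _ _ => ∅

/-- The interpretation of the expression `KV^φ` in a frame `F`: the set variables `P^l_i`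
are interpreted by `P` and the extra variable `#` by the second argument.
(Junk value `∅` on constructors that do not occur in regular box-formulas.) -/
def KVsem {Λ : Type u} (F : Frame Λ) (P : ℕ × ℕ → Set F.W) : MF Λ (ℕ × ℕ) → Set F.W → Set F.W
  | .var _, X => X
  | .imp POS ψ, X => KVsem F P ψ (X ∩ KPsem F P POS)
  | .box l ψ, X => KVsem F P ψ (Rfwd F l X)
  | _, _ => ∅

/-- The semantic minimal valuation: given points `g j` and sets `f j` of regular
box-formulas to be verified at `g j`, `thetaMinSem F g f k i` is the minimal value of the
variable `p^k_i`; it is defined by recursion on the rank `k` as the union, over all `j` and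
all `φ ∈ f j` with head `p^k_i`, of `KV^φ(g j)` computed with the minimal values of the
variables of lower rank. -/
noncomputable def thetaMinSem {Λ : Type u} (F : Frame Λ) {ι : Type w} (g : ι → F.W)
    (f : ι → Set (MF Λ (ℕ × ℕ))) : ℕ → ℕ → Set F.W :=
  fun k => Nat.strongRecOn (motive := fun _ => ℕ → Set F.W) k fun k ih i =>
    ⋃ (j : ι), ⋃ φ ∈ f j, ⋃ (_ : RegBF Prod.fst φ (k, i)),
      KVsem F (fun q => if h : q.1 < k then ih q.1 h q.2 else ∅) φ {g j}

/-- `L`-expressions: terms of the language `L` with individual variables `x_i` (`i : ℕ`),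
constants `⊤, ⊥`, unary `R_λ^{-1}`, `R_λ^□`, `R_λ` and binary `∩`, `∪`. -/
inductive LExp (Λ : Type u) : Type u
  | var : ℕ → LExp Λ
  | top : LExp Λ
  | bot : LExp Λ
  | inter : LExp Λ → LExp Λ → LExp Λ
  | union : LExp Λ → LExp Λ → LExp Λ
  | rinv : Λ → LExp Λ → LExp Λ
  | rbox : Λ → LExp Λ → LExp Λ
  | rfw : Λ → LExp Λ → LExp Λ

namespace LExp
variable {Λ : Type u}

/-- Denotation of an `L`-expression in a frame `F`, the variable `x_i` denoting the
singleton of the point `g i`. -/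
def den (F : Frame Λ) (g : ℕ → F.W) : LExp Λ → Set F.W
  | var i => {g i}
  | top => Set.univ
  | bot => ∅
  | inter a b => den F g a ∩ den F g b
  | union a b => den F g a ∪ den F g b
  | rinv l a => Rinv F l (den F g a)
  | rbox l a => RboxOp F l (den F g a)
  | rfw l a => Rfwd F l (den F g a)

/-- The set of (indices of) individual variables occurring in an `L`-expression. -/
def evars : LExp Λ → Set ℕ
  | var i => {i}
  | top => ∅
  | bot => ∅
  | inter a b => evars a ∪ evars b
  | union a b => evars a ∪ evars b
  | rinv _ a => evars a
  | rbox _ a => evars a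
  | rfw _ a => evars a

end LExp

/-- The subexpression relation on `L`-expressions. -/
inductive Subexp {Λ : Type u} : LExp Λ → LExp Λ → Prop
  | refl (e : LExp Λ) : Subexp e e
  | interL {e a b} : Subexp e a → Subexp e (.inter a b)
  | interR {e a b} : Subexp e b → Subexp e (.inter a b)
  | unionL {e a b} : Subexp e a → Subexp e (.union a b)
  | unionR {e a b} : Subexp e b → Subexp e (.union a b)
  | rinv (l) {e a} : Subexp e a → Subexp e (.rinv l a)
  | rbox (l) {e a} : Subexp e a → Subexp e (.rbox l a)
  | rfw (l) {e a} : Subexp e a → Subexp e (.rfw l a)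

/-- `SafeFor e`: `e` is "safe for" the ambient expression, i.e. `e` is a variable, or
`R_λ(e')` with `e'` safe for it, or an intersection one of whose components is safe for it. -/
inductive SafeFor {Λ : Type u} : LExp Λ → Prop
  | var (i : ℕ) : SafeFor (.var i)
  | rfw (l) {a} : SafeFor a → SafeFor (.rfw l a)
  | interL {a b} : SafeFor a → SafeFor (.inter a b)
  | interR {a b} : SafeFor b → SafeFor (.inter a b)

/-- An `L`-expression is safe if it is safe for itself and the argument of every
subexpression of the form `R_λ(ψ)` is safe for it. -/
def Safe {Λ : Type u} (e : LExp Λ) : Prop :=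
  SafeFor e ∧ ∀ l a, Subexp (.rfw l a) e → SafeFor a

mutual
  /-- The class `K`: the least class of `L`-expressions containing the variables and closed
  under `S ↦ R_λ(S)` and `S ↦ S ∩ E` for `E` a positive combination of members of `K`. -/
  inductive InK {Λ : Type u} : LExp Λ → Prop
    | var (i : ℕ) : InK (.var i)
    | rfw (l : Λ) {S : LExp Λ} : InK S → InK (.rfw l S)
    | inter {S E : LExp Λ} : InK S → PosOfK E → InK (.inter S E)
  /-- Positive combinations of members of `K`: built from members of `K` using only
  `∩`, `∪`, `R_λ^{-1}`, `R_λ^□`, `⊤`, `⊥`. -/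
  inductive PosOfK {Λ : Type u} : LExp Λ → Prop
    | ofK {e : LExp Λ} : InK e → PosOfK e
    | top : PosOfK .top
    | bot : PosOfK .bot
    | inter {a b} : PosOfK a → PosOfK b → PosOfK (.inter a b)
    | union {a b} : PosOfK a → PosOfK b → PosOfK (.union a b)
    | rinv (l) {a} : PosOfK a → PosOfK (.rinv l a)
    | rbox (l) {a} : PosOfK a → PosOfK (.rbox l a)
end

/-- Quasi-safe `L`-expressions: positive combinations of safe expressions, i.e. built from
safe expressions using only `∩`, `∪`, `R_λ^{-1}`, `R_λ^□`, `⊤`, `⊥`. -/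
inductive QuasiSafe {Λ : Type u} : LExp Λ → Prop
  | safe {e : LExp Λ} : Safe e → QuasiSafe e
  | top : QuasiSafe .top
  | bot : QuasiSafe .bot
  | inter {a b} : QuasiSafe a → QuasiSafe b → QuasiSafe (.inter a b)
  | union {a b} : QuasiSafe a → QuasiSafe b → QuasiSafe (.union a b)
  | rinv (l) {a} : QuasiSafe a → QuasiSafe (.rinv l a)
  | rbox (l) {a} : QuasiSafe a → QuasiSafe (.rbox l a)

/-- `ReplOne i ψ φ φ'`: `φ'` is the result of replacing one occurrence of the variable
`x_i` in `φ` by `ψ`. -/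
inductive ReplOne {Λ : Type u} (i : ℕ) (ψ : LExp Λ) : LExp Λ → LExp Λ → Prop
  | here : ReplOne i ψ (.var i) ψ
  | interL {a a' b} : ReplOne i ψ a a' → ReplOne i ψ (.inter a b) (.inter a' b)
  | interR {a b b'} : ReplOne i ψ b b' → ReplOne i ψ (.inter a b) (.inter a b')
  | unionL {a a' b} : ReplOne i ψ a a' → ReplOne i ψ (.union a b) (.union a' b)
  | unionR {a b b'} : ReplOne i ψ b b' → ReplOne i ψ (.union a b) (.union a b')
  | rinv (l) {a a'} : ReplOne i ψ a a' → ReplOne i ψ (.rinv l a) (.rinv l a')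
  | rbox (l) {a a'} : ReplOne i ψ a a' → ReplOne i ψ (.rbox l a) (.rbox l a')
  | rfw (l) {a a'} : ReplOne i ψ a a' → ReplOne i ψ (.rfw l a) (.rfw l a')

/-- A finite union of `L`-expressions (empty union is `⊥`). -/
def unionList {Λ : Type u} : List (LExp Λ) → LExp Λ
  | [] => .bot
  | e :: es => .union e (unionList es)

/-- `UnionOfSafe e`: `e` is a finite union of safe expressions. -/
inductive UnionOfSafe {Λ : Type u} : LExp Λ → Prop
  | bot : UnionOfSafe .bot
  | safe {e : LExp Λ} : Safe e → UnionOfSafe e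
  | union {a b} : UnionOfSafe a → UnionOfSafe b → UnionOfSafe (.union a b)

/-- Syntactic `KP^{POS}`: the `L`-expression obtained from the positive formula `POS` by
replacing each set variable `P^l_i` by the `L`-expression `KF (l, i)`.
(Junk value on non-positive constructors.) -/
def KPsub {Λ : Type u} (KF : ℕ × ℕ → LExp Λ) : MF Λ (ℕ × ℕ) → LExp Λ
  | .var q => KF q
  | .top => .top
  | .bot => .bot
  | .and a b => .inter (KPsub KF a) (KPsub KF b)
  | .or a b => .union (KPsub KF a) (KPsub KF b)
  | .dia l a => .rinv l (KPsub KF a)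
  | .box l a => .rbox l (KPsub KF a)
  | .neg _ => .bot
  | .imp _ _ => .bot

/-- Syntactic `KVF^φ(t)`: the `L`-expression obtained from `KV^φ` by substituting the
`L`-expression `t` for `#` and `KF (l, i)` for each set variable `P^l_i`.
(Junk value on constructors that do not occur in regular box-formulas.) -/
def KVFsyn {Λ : Type u} (KF : ℕ × ℕ → LExp Λ) : MF Λ (ℕ × ℕ) → LExp Λ → LExp Λ
  | .var _, t => t
  | .imp POS ψ, t => KVFsyn KF ψ (.inter t (KPsub KF POS))
  | .box l ψ, t => KVFsyn KF ψ (.rfw l t)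
  | _, _ => .bot

open scoped Classical in
/-- The syntactic minimal valuation `KF_f^{p^k_i}` for variables `x_0, …, x_{n-1}` and
`f` assigning to each variable a finite set of regular box-formulas: defined by recursion on
the rank `k` as the union, over all `j < n` and all `φ ∈ f j` with head `p^k_i`, of
`KVF_f^φ(x_j)`, which is `KV^φ` with `x_j` substituted for `#` and `KF_f^{p^l_m}`
substituted for each `P^l_m` with `l < k`. -/
noncomputable def KFsyn {Λ : Type u} (n : ℕ) (f : ℕ → Finset (MF Λ (ℕ × ℕ))) :
    ℕ → ℕ → LExp Λ :=
  fun k => Nat.strongRecOn (motive := fun _ => ℕ → LExp Λ) k fun k ih i =>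
    unionList (((List.range n).flatMap fun j =>
      ((f j).toList.filter fun φ => decide (RegBF Prod.fst φ (k, i))).map fun φ =>
        KVFsyn (fun q => if h : q.1 < k then ih q.1 h q.2 else LExp.bot) φ (LExp.var j)))

/-- The expressions substituted for the set variables `P^l_m`, `l < k`, in `KVF`:
the syntactic minimal valuations of the lower ranks. -/
noncomputable def lowKF {Λ : Type u} (n : ℕ) (f : ℕ → Finset (MF Λ (ℕ × ℕ))) (k : ℕ) :
    ℕ × ℕ → LExp Λ :=
  fun q => if q.1 < k then KFsyn n f q.1 q.2 else LExp.bot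

/-- `KVFat n f φ j k` is the `L`-expression `KVF_f^φ(x_j)` for `φ` a regular box-formula
of rank `k`. -/
noncomputable def KVFat {Λ : Type u} (n : ℕ) (f : ℕ → Finset (MF Λ (ℕ × ℕ)))
    (φ : MF Λ (ℕ × ℕ)) (j k : ℕ) : LExp Λ :=
  KVFsyn (lowKF n f k) φ (.var j)

/-- A labelled tree-like structure: a set of vertices with relations indexed by `Λ`,
a root, and a label function assigning to every vertex a set of labels from `α`. -/
structure LabTree (Λ : Type u) (α : Type v) where
  V : Type
  R : Λ → V → V → Prop
  root : V
  label : V → Set α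

/-- Derivation trees witnessing that a formula is built from base formulas using only
`∧` and `◇_λ`. -/
inductive BuiltT (Λ : Type u) (V : Type v) : Type (max u v)
  | base : MF Λ V → BuiltT Λ V
  | and : BuiltT Λ V → BuiltT Λ V → BuiltT Λ V
  | dia : Λ → BuiltT Λ V → BuiltT Λ V

/-- The modal formula described by a derivation tree. -/
def BuiltT.formula {Λ : Type u} {V : Type v} : BuiltT Λ V → MF Λ V
  | base φ => φ
  | and a b => .and a.formula b.formula
  | dia l a => .dia l a.formula

/-- The derivation tree uses only base formulas from `A`. -/
def BuiltT.Ok {Λ : Type u} {V : Type v} (A : Set (MF Λ V)) : BuiltT Λ V → Prop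
  | base φ => φ ∈ A
  | and a b => a.Ok A ∧ b.Ok A
  | dia _ a => a.Ok A

/-- Helper for gluing two labelled trees at their roots: the relation on the disjoint sum,
with the edges out of the second root re-attached to the first root. -/
def glueR {Λ : Type u} {W₁ W₂ : Type} (R₁ : Λ → W₁ → W₁ → Prop) (R₂ : Λ → W₂ → W₂ → Prop)
    (r₁ : W₁) (r₂ : W₂) (l : Λ) : W₁ ⊕ W₂ → W₁ ⊕ W₂ → Prop
  | Sum.inl a, Sum.inl b => R₁ l a b
  | Sum.inr a, Sum.inr b => R₂ l a b
  | Sum.inl a, Sum.inr b => a = r₁ ∧ R₂ l r₂ b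
  | Sum.inr _, Sum.inl _ => False

open Classical in
/-- Helper for gluing two labelled trees at their roots: the label function, the glued root
receiving the union of the two root labels. -/
noncomputable def glueLab {α : Type w} {W₁ W₂ : Type} (L₁ : W₁ → Set α) (L₂ : W₂ → Set α)
    (r₁ : W₁) (r₂ : W₂) : W₁ ⊕ W₂ → Set α
  | Sum.inl a => if a = r₁ then L₁ r₁ ∪ L₂ r₂ else L₁ a
  | Sum.inr b => L₂ b

/-- Helper for prefixing a labelled tree with a new root: the relation on `Option W`,
with an `R_{l₀}`-edge from the new root `none` to the old root `r`. -/
def prefR {Λ : Type u} {W : Type} (R : Λ → W → W → Prop) (l₀ : Λ) (r : W) (l : Λ) :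
    Option W → Option W → Prop
  | none, some w => l = l₀ ∧ w = r
  | some a, some b => R l a b
  | _, _ => False

/-- Helper for prefixing a labelled tree with a new root: the label function, the new root
getting the empty label. -/
def prefLab {α : Type w} {W : Type} (L : W → Set α) : Option W → Set α
  | none => ∅
  | some a => L a

/-- The reduced syntactical tree of a formula built from base formulas using `∧` and `◇_λ`:
a single root labelled `{a}` for a base formula `a`; for a conjunction, the two trees
with their roots identified (labels united); for `◇_λ ψ`, a new root with empty label and an
`R_λ`-edge to the root of the tree of `ψ`. -/
noncomputable def TreeOf {Λ : Type u} {V : Type v} : BuiltT Λ V → LabTree Λ (MF Λ V)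
  | .base φ =>
      { V := Unit, R := fun _ _ _ => False, root := (), label := fun _ => {φ} }
  | .and b₁ b₂ =>
      let T₁ := TreeOf b₁
      let T₂ := TreeOf b₂
      { V := {v : T₁.V ⊕ T₂.V // v ≠ Sum.inr T₂.root},
        R := fun l u v => glueR T₁.R T₂.R T₁.root T₂.root l u.1 v.1,
        root := ⟨Sum.inl T₁.root, by exact Sum.inl_ne_inr⟩,
        label := fun v => glueLab T₁.label T₂.label T₁.root T₂.root v.1 }
  | .dia l b =>
      let T := TreeOf b
      { V := Option T.V,
        R := fun l' u v => prefR T.R l T.root l' u v,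
        root := none,
        label := fun v => prefLab T.label v }

/-- Restrictedly positive first-order formulas over the frame language: built from atoms
`y ∈ E` (`E` an `L`-expression) using `∧`, `∨` and the restricted quantifiers
`(∀ y ◁_λ x)` and `(∃ y ◁_λ x)`. -/
inductive KrF (Λ : Type u) : Type u
  | atom : ℕ → LExp Λ → KrF Λ
  | and : KrF Λ → KrF Λ → KrF Λ
  | or : KrF Λ → KrF Λ → KrF Λ
  | all : ℕ → Λ → ℕ → KrF Λ → KrF Λ
  | ex : ℕ → Λ → ℕ → KrF Λ → KrF Λ

namespace KrF
variable {Λ : Type u}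

/-- Truth of a restrictedly positive formula in a frame under an assignment `g` of points to
individual variables; the atom `y ∈ E` is read via the `#`-translation, i.e. as membership
of `g y` in the denotation of `E`. -/
def holds (F : Frame Λ) : (ℕ → F.W) → KrF Λ → Prop
  | g, atom y E => g y ∈ E.den F g
  | g, and a b => holds F g a ∧ holds F g b
  | g, or a b => holds F g a ∨ holds F g b
  | g, all y l x β => ∀ w, F.R l (g x) w → holds F (Function.update g y w) β
  | g, ex y l x β => ∃ w, F.R l (g x) w ∧ holds F (Function.update g y w) β

/-- Free variables. -/
def fv : KrF Λ → Set ℕ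
  | atom y E => insert y E.evars
  | and a b => fv a ∪ fv b
  | or a b => fv a ∪ fv b
  | all y _ x β => insert x (fv β \ {y})
  | ex y _ x β => insert x (fv β \ {y})

/-- Bound variables. -/
def bv : KrF Λ → Set ℕ
  | atom _ _ => ∅
  | and a b => bv a ∪ bv b
  | or a b => bv a ∪ bv b
  | all y _ _ β => insert y (bv β)
  | ex y _ _ β => insert y (bv β)

/-- No two distinct quantifier occurrences bind the same variable. -/
def CleanBound : KrF Λ → Prop
  | atom _ _ => True
  | and a b => CleanBound a ∧ CleanBound b ∧ bv a ∩ bv b = ∅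
  | or a b => CleanBound a ∧ CleanBound b ∧ bv a ∩ bv b = ∅
  | all y _ _ β => CleanBound β ∧ y ∉ bv β
  | ex y _ _ β => CleanBound β ∧ y ∉ bv β

/-- Clean formulas: no variable occurs both free and bound, and no two distinct quantifier
occurrences bind the same variable. -/
def Clean (φ : KrF Λ) : Prop := fv φ ∩ bv φ = ∅ ∧ CleanBound φ

/-- All the `L`-expressions occurring in atoms of the formula satisfy `P`. -/
def AtomsAll (P : LExp Λ → Prop) : KrF Λ → Prop
  | atom _ E => P E
  | and a b => AtomsAll P a ∧ AtomsAll P b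
  | or a b => AtomsAll P a ∧ AtomsAll P b
  | all _ _ _ β => AtomsAll P β
  | ex _ _ _ β => AtomsAll P β

/-- Quantifier-free formulas (built from atoms using only `∧` and `∨`). -/
def QFree : KrF Λ → Prop
  | atom _ _ => True
  | and a b => QFree a ∧ QFree b
  | or a b => QFree a ∧ QFree b
  | all _ _ _ _ => False
  | ex _ _ _ _ => False

/-- Formulas built from atoms using only `∧`, `∨` and restricted universal quantification
(no existential quantifier). -/
def NoEx : KrF Λ → Prop
  | atom _ _ => True
  | and a b => NoEx a ∧ NoEx b
  | or a b => NoEx a ∧ NoEx b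
  | all _ _ _ β => NoEx β
  | ex _ _ _ _ => False

/-- `GKok U e φ`: every variable occurring in an `L`-expression of an atom of `φ` is
inherently universal. Here `U` is the set of variables that are inherently universal so far
(initially the free variables) and `e` records whether we are within the scope of an
existential quantifier. -/
def GKok : Set ℕ → Bool → KrF Λ → Prop
  | U, _, atom _ E => E.evars ⊆ U
  | U, e, and a b => GKok U e a ∧ GKok U e b
  | U, e, or a b => GKok U e a ∧ GKok U e b
  | U, false, all y _ _ β => GKok (insert y U) false β
  | U, true, all _ _ _ β => GKok U true β
  | U, _, ex _ _ _ β => GKok U true β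

end KrF

/-- A generalized Kracht formula with free variables: clean, restrictedly positive with safe
atoms, and in every atom `y ∈ E` all variables of `E` are inherently universal. -/
def IsGenKrachtFV {Λ : Type u} (α : KrF Λ) : Prop :=
  α.Clean ∧ α.AtomsAll Safe ∧ α.GKok α.fv false

/-- A generalized Kracht formula: a generalized Kracht formula with free variables whose
only free variable is `x0`. -/
def IsGenKracht {Λ : Type u} (α : KrF Λ) (x0 : ℕ) : Prop :=
  IsGenKrachtFV α ∧ α.fv = {x0}

/-- Generalized Sahlqvist antecedents: built from regular box-formulas and negative
formulas using only `∧`, `∨`, `◇_λ`. -/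
inductive GSAnt {Λ : Type u} : MF Λ (ℕ × ℕ) → Prop
  | reg {φ p} : RegBF Prod.fst φ p → GSAnt φ
  | neg {φ} : Positive φ → GSAnt (.neg φ)
  | and {a b} : GSAnt a → GSAnt b → GSAnt (.and a b)
  | or {a b} : GSAnt a → GSAnt b → GSAnt (.or a b)
  | dia (l) {a} : GSAnt a → GSAnt (.dia l a)

/-- Generalized Sahlqvist formulas: built from generalized Sahlqvist implications
`GSA → ⊥` by applying boxes and conjunctions, and disjunctions only to formulas without
common propositional variables. -/
inductive GSF {Λ : Type u} : MF Λ (ℕ × ℕ) → Prop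
  | impl {a} : GSAnt a → GSF (.imp a .bot)
  | box (l) {a} : GSF a → GSF (.box l a)
  | and {a b} : GSF a → GSF b → GSF (.and a b)
  | or {a b} : GSF a → GSF b → MF.vars a ∩ MF.vars b = ∅ → GSF (.or a b)

open Classical in
/-- The modal translation `E^T` of a quasi-safe expression: safe subexpressions are
replaced by their associated propositional variables `p_E`, and `∩, ∪, R^{-1}_λ, R^□_λ`
become `∧, ∨, ◇_λ, □_λ`. -/
noncomputable def Etrans {Λ : Type u} (pE : LExp Λ → ℕ × ℕ) : LExp Λ → MF Λ (ℕ × ℕ)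
  | .var i => .var (pE (.var i))
  | .top => .top
  | .bot => .bot
  | .inter a b =>
      if Safe (LExp.inter a b) then .var (pE (.inter a b))
      else .and (Etrans pE a) (Etrans pE b)
  | .union a b =>
      if Safe (LExp.union a b) then .var (pE (.union a b))
      else .or (Etrans pE a) (Etrans pE b)
  | .rinv l a =>
      if Safe (LExp.rinv l a) then .var (pE (.rinv l a)) else .dia l (Etrans pE a)
  | .rbox l a =>
      if Safe (LExp.rbox l a) then .var (pE (.rbox l a)) else .box l (Etrans pE a)
  | .rfw l a => if Safe (LExp.rfw l a) then .var (pE (.rfw l a)) else .bot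

/-- A finite disjunction of modal formulas (empty disjunction is `⊥`). -/
def orList {Λ : Type u} {V : Type v} : List (MF Λ V) → MF Λ V
  | [] => .bot
  | a :: as => .or a (orList as)

namespace S18

open KrF

/-- Finite intersection of a list of `L`-expressions (empty is `⊤`). -/
def interList {Λ : Type u} : List (LExp Λ) → LExp Λ
  | [] => .top
  | e :: es => .inter e (interList es)

lemma den_interList {Λ : Type u} (F : Frame Λ) (g : ℕ → F.W) (x : F.W) :
    ∀ L : List (LExp Λ), x ∈ LExp.den F g (interList L) ↔ ∀ E ∈ L, x ∈ LExp.den F g E := by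
  intro L; induction L with
  | nil => simp [interList, LExp.den]
  | cons e es ih => simp [interList, LExp.den, ih]

lemma den_unionList {Λ : Type u} (F : Frame Λ) (g : ℕ → F.W) (x : F.W) :
    ∀ L : List (LExp Λ), x ∈ LExp.den F g (unionList L) ↔ ∃ E ∈ L, x ∈ LExp.den F g E := by
  intro L; induction L with
  | nil => simp [unionList, LExp.den]
  | cons e es ih => simp [unionList, LExp.den, ih]

lemma quasiSafe_interList {Λ : Type u} {L : List (LExp Λ)} (h : ∀ E ∈ L, QuasiSafe E) :
    QuasiSafe (interList L) := by
  induction L with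
  | nil => exact QuasiSafe.top
  | cons e es ih =>
      exact QuasiSafe.inter (h e (by simp)) (ih fun E hE => h E (by simp [hE]))

lemma quasiSafe_unionList {Λ : Type u} {L : List (LExp Λ)} (h : ∀ E ∈ L, QuasiSafe E) :
    QuasiSafe (unionList L) := by
  induction L with
  | nil => exact QuasiSafe.bot
  | cons e es ih =>
      exact QuasiSafe.union (h e (by simp)) (ih fun E hE => h E (by simp [hE]))

lemma evars_interList {Λ : Type u} {U : Set ℕ} {L : List (LExp Λ)}
    (h : ∀ E ∈ L, LExp.evars E ⊆ U) : LExp.evars (interList L) ⊆ U := by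
  induction L with
  | nil => simp [interList, LExp.evars]
  | cons e es ih =>
      simp only [interList, LExp.evars]
      exact Set.union_subset (h e (by simp)) (ih fun E hE => h E (by simp [hE]))

lemma evars_unionList {Λ : Type u} {U : Set ℕ} {L : List (LExp Λ)}
    (h : ∀ E ∈ L, LExp.evars E ⊆ U) : LExp.evars (unionList L) ⊆ U := by
  induction L with
  | nil => simp [unionList, LExp.evars]
  | cons e es ih =>
      simp only [unionList, LExp.evars]
      exact Set.union_subset (h e (by simp)) (ih fun E hE => h E (by simp [hE]))

lemma den_update {Λ : Type u} (F : Frame Λ) (g : ℕ → F.W) (z : ℕ) (w : F.W) :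
    ∀ E : LExp Λ, z ∉ LExp.evars E →
      LExp.den F (Function.update g z w) E = LExp.den F g E := by
  intro E
  induction E with
  | var i =>
      intro h
      simp only [LExp.evars, Set.mem_singleton_iff] at h
      simp [LExp.den, Function.update_of_ne (Ne.symm h)]
  | top => intro _; rfl
  | bot => intro _; rfl
  | inter a b iha ihb =>
      intro h
      simp only [LExp.evars, Set.mem_union, not_or] at h
      simp [LExp.den, iha h.1, ihb h.2]
  | union a b iha ihb =>
      intro h
      simp only [LExp.evars, Set.mem_union, not_or] at h
      simp [LExp.den, iha h.1, ihb h.2]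
  | rinv l a ih => intro h; simp [LExp.den, ih h]
  | rbox l a ih => intro h; simp [LExp.den, ih h]
  | rfw l a ih => intro h; simp [LExp.den, ih h]

/-- Well-scoped formulas: every quantifier's restrictor differs from its bound variable and
is not re-bound inside, and no bound variable is re-bound in its own scope. -/
def Scoped {Λ : Type u} : KrF Λ → Prop
  | .atom _ _ => True
  | .and a b => Scoped a ∧ Scoped b
  | .or a b => Scoped a ∧ Scoped b
  | .all y _ x β => x ≠ y ∧ x ∉ bv β ∧ y ∉ bv β ∧ Scoped β
  | .ex y _ x β => x ≠ y ∧ x ∉ bv β ∧ y ∉ bv β ∧ Scoped β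

lemma scoped_of_clean {Λ : Type u} :
    ∀ φ : KrF Λ, CleanBound φ → fv φ ∩ bv φ = ∅ → Scoped φ := by
  intro φ
  induction φ with
  | atom y E => intro _ _; trivial
  | and a b iha ihb =>
      intro hc hd
      simp only [CleanBound] at hc
      refine ⟨iha hc.1 ?_, ihb hc.2.1 ?_⟩ <;>
      · apply Set.eq_empty_of_subset_empty
        rw [← hd]
        intro v hv
        simp only [fv, bv, Set.mem_inter_iff, Set.mem_union] at *
        tauto
  | or a b iha ihb =>
      intro hc hd
      simp only [CleanBound] at hc
      refine ⟨iha hc.1 ?_, ihb hc.2.1 ?_⟩ <;>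
      · apply Set.eq_empty_of_subset_empty
        rw [← hd]
        intro v hv
        simp only [fv, bv, Set.mem_inter_iff, Set.mem_union] at *
        tauto
  | all y l x β ih =>
      intro hc hd
      simp only [CleanBound] at hc
      have hx : x ∉ bv (KrF.all y l x β) := by
        intro hx
        have : x ∈ fv (KrF.all y l x β) ∩ bv (KrF.all y l x β) :=
          ⟨by simp [fv], hx⟩
        rw [hd] at this; exact this
      have hxy : x ≠ y := by
        intro h; apply hx; simp [bv, h]
      have hxb : x ∉ bv β := by
        intro h; apply hx; simp [bv, h]
      refine ⟨hxy, hxb, hc.2, ih hc.1 ?_⟩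
      apply Set.eq_empty_of_subset_empty
      intro v hv
      rcases hv with ⟨hv1, hv2⟩
      by_cases hvy : v = y
      · exact absurd (hvy ▸ hv2) hc.2
      · have : v ∈ fv (KrF.all y l x β) ∩ bv (KrF.all y l x β) := by
          constructor
          · simp [fv]; right; exact ⟨hv1, hvy⟩
          · simp [bv]; right; exact hv2
        rw [hd] at this; exact this
  | ex y l x β ih =>
      intro hc hd
      simp only [CleanBound] at hc
      have hx : x ∉ bv (KrF.ex y l x β) := by
        intro hx
        have : x ∈ fv (KrF.ex y l x β) ∩ bv (KrF.ex y l x β) :=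
          ⟨by simp [fv], hx⟩
        rw [hd] at this; exact this
      have hxy : x ≠ y := by
        intro h; apply hx; simp [bv, h]
      have hxb : x ∉ bv β := by
        intro h; apply hx; simp [bv, h]
      refine ⟨hxy, hxb, hc.2, ih hc.1 ?_⟩
      apply Set.eq_empty_of_subset_empty
      intro v hv
      rcases hv with ⟨hv1, hv2⟩
      by_cases hvy : v = y
      · exact absurd (hvy ▸ hv2) hc.2
      · have : v ∈ fv (KrF.ex y l x β) ∩ bv (KrF.ex y l x β) := by
          constructor
          · simp [fv]; right; exact ⟨hv1, hvy⟩
          · simp [bv]; right; exact hv2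
        rw [hd] at this; exact this

lemma atomsAll_mono {Λ : Type u} {P Q : LExp Λ → Prop} (h : ∀ E, P E → Q E) :
    ∀ φ : KrF Λ, AtomsAll P φ → AtomsAll Q φ := by
  intro φ
  induction φ with
  | atom y E => exact h E
  | and a b iha ihb => exact fun hp => ⟨iha hp.1, ihb hp.2⟩
  | or a b iha ihb => exact fun hp => ⟨iha hp.1, ihb hp.2⟩
  | all y l x β ih => exact ih
  | ex y l x β ih => exact ih

/-- Truth of a disjunct: the constant atoms hold and `g y` belongs to the set expression. -/
def pairHolds {Λ : Type u} (F : Frame Λ) (g : ℕ → F.W) (y : ℕ)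
    (p : List (ℕ × LExp Λ) × LExp Λ) : Prop :=
  (∀ q ∈ p.1, g q.1 ∈ LExp.den F g q.2) ∧ g y ∈ LExp.den F g p.2

open Classical in
/-- Move the atoms with subject `y` of a list of atoms into the set-expression component. -/
noncomputable def absorb {Λ : Type u} (y : ℕ) (L : List (ℕ × LExp Λ)) :
    List (ℕ × LExp Λ) × LExp Λ :=
  (L.filter (fun q => decide (q.1 ≠ y)),
   interList ((L.filter (fun q => decide (q.1 = y))).map Prod.snd))

lemma absorb_sem {Λ : Type u} (F : Frame Λ) (g : ℕ → F.W) (y : ℕ)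
    (L : List (ℕ × LExp Λ)) :
    (∀ q ∈ L, g q.1 ∈ LExp.den F g q.2) ↔ pairHolds F g y (absorb y L) := by
  unfold pairHolds absorb
  simp only [List.mem_filter, decide_eq_true_eq, den_interList, List.mem_map]
  constructor
  · intro h
    refine ⟨fun q hq => h q hq.1, ?_⟩
    rintro E ⟨q, ⟨hq, hqy⟩, rfl⟩
    have := h q hq
    rwa [hqy] at this
  · rintro ⟨h1, h2⟩ q hq
    by_cases hqy : q.1 = y
    · rw [hqy]
      exact h2 q.2 ⟨q, ⟨hq, hqy⟩, rfl⟩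
    · exact h1 q ⟨hq, hqy⟩

open Classical in
lemma subset_trick {α : Type*} {W : Type*} (ps : List α) (C : α → Prop) (S : W → Prop)
    (A : α → W → Prop) :
    (∀ w, S w → ∃ p ∈ ps, C p ∧ A p w) ↔
      ∃ T ∈ ps.sublists, (∀ p ∈ T, C p) ∧ ∀ w, S w → ∃ p ∈ T, A p w := by
  constructor
  · intro h
    refine ⟨ps.filter (fun p => decide (C p)), ?_, ?_, ?_⟩
    · exact List.mem_sublists.2 List.filter_sublist
    · intro p hp
      exact of_decide_eq_true (List.mem_filter.1 hp).2
    · intro w hw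
      obtain ⟨p, hp, hC, hA⟩ := h w hw
      exact ⟨p, List.mem_filter.2 ⟨hp, decide_eq_true hC⟩, hA⟩
  · rintro ⟨T, hT, hC, hA⟩ w hw
    obtain ⟨p, hp, hAp⟩ := hA w hw
    exact ⟨p, (List.mem_sublists.1 hT).subset hp, hC p hp, hAp⟩

/-- The DNF decomposition of a `NoEx` formula in the scope of the existential quantifier
binding `y`: a finite disjunction of conjunctions of constant quasi-safe atoms together
with a quasi-safe membership constraint on `y`. -/
lemma dnfLem {Λ : Type u} (U : Set ℕ) :
    ∀ (γ : KrF Λ) (y : ℕ), NoEx γ → AtomsAll QuasiSafe γ →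
      AtomsAll (fun E => LExp.evars E ⊆ U) γ → Scoped γ →
      (∀ v ∈ bv γ, v ∉ U) → y ∉ bv γ → y ∉ U →
      ∃ ps : List (List (ℕ × LExp Λ) × LExp Λ),
        (∀ p ∈ ps, QuasiSafe p.2 ∧ LExp.evars p.2 ⊆ U ∧
          ∀ q ∈ p.1, q.1 ≠ y ∧ QuasiSafe q.2 ∧ LExp.evars q.2 ⊆ U) ∧
        ∀ (F : Frame Λ) (g : ℕ → F.W), holds F g γ ↔ ∃ p ∈ ps, pairHolds F g y p := by
  intro γ
  induction γ with
  | atom s E =>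
      intro y _ hqs hev _ _ _ hyU
      by_cases hsy : s = y
      · refine ⟨[([], E)], ?_, ?_⟩
        · intro p hp
          simp only [List.mem_singleton] at hp
          subst hp
          exact ⟨hqs, hev, by simp⟩
        · intro F g
          simp [holds, pairHolds, hsy]
      · refine ⟨[([(s, E)], .top)], ?_, ?_⟩
        · intro p hp
          simp only [List.mem_singleton] at hp
          subst hp
          refine ⟨QuasiSafe.top, by simp [LExp.evars], ?_⟩
          intro q hq
          simp only [List.mem_singleton] at hq
          subst hq
          exact ⟨hsy, hqs, hev⟩
        · intro F g
          simp [holds, pairHolds, LExp.den]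
  | and a b iha ihb =>
      intro y hne hqs hev hsc hbv hyb hyU
      obtain ⟨psa, hpa, hea⟩ := iha y hne.1 hqs.1 hev.1 hsc.1
        (fun v hv => hbv v (by simp [bv, hv])) (fun h => hyb (by simp [bv, h])) hyU
      obtain ⟨psb, hpb, heb⟩ := ihb y hne.2 hqs.2 hev.2 hsc.2
        (fun v hv => hbv v (by simp [bv, hv])) (fun h => hyb (by simp [bv, h])) hyU
      refine ⟨psa.flatMap (fun p => psb.map (fun p' => (p.1 ++ p'.1, .inter p.2 p'.2))),
        ?_, ?_⟩
      · intro p hp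
        simp only [List.mem_flatMap, List.mem_map] at hp
        obtain ⟨p1, hp1, p2, hp2, rfl⟩ := hp
        obtain ⟨h1a, h1b, h1c⟩ := hpa p1 hp1
        obtain ⟨h2a, h2b, h2c⟩ := hpb p2 hp2
        refine ⟨QuasiSafe.inter h1a h2a, ?_, ?_⟩
        · simp only [LExp.evars]
          exact Set.union_subset h1b h2b
        · intro q hq
          rcases List.mem_append.1 hq with h | h
          exacts [h1c q h, h2c q h]
      · intro F g
        simp only [holds, hea F g, heb F g]
        constructor
        · rintro ⟨⟨p1, hp1, hc1, hm1⟩, ⟨p2, hp2, hc2, hm2⟩⟩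
          refine ⟨(p1.1 ++ p2.1, .inter p1.2 p2.2), ?_, ?_, ?_⟩
          · simp only [List.mem_flatMap, List.mem_map]
            exact ⟨p1, hp1, p2, hp2, rfl⟩
          · intro q hq
            rcases List.mem_append.1 hq with h | h
            exacts [hc1 q h, hc2 q h]
          · exact ⟨hm1, hm2⟩
        · rintro ⟨p, hp, hc, hm⟩
          simp only [List.mem_flatMap, List.mem_map] at hp
          obtain ⟨p1, hp1, p2, hp2, rfl⟩ := hp
          exact ⟨⟨p1, hp1, fun q hq => hc q (List.mem_append.2 (Or.inl hq)), hm.1⟩,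
            ⟨p2, hp2, fun q hq => hc q (List.mem_append.2 (Or.inr hq)), hm.2⟩⟩
  | or a b iha ihb =>
      intro y hne hqs hev hsc hbv hyb hyU
      obtain ⟨psa, hpa, hea⟩ := iha y hne.1 hqs.1 hev.1 hsc.1
        (fun v hv => hbv v (by simp [bv, hv])) (fun h => hyb (by simp [bv, h])) hyU
      obtain ⟨psb, hpb, heb⟩ := ihb y hne.2 hqs.2 hev.2 hsc.2
        (fun v hv => hbv v (by simp [bv, hv])) (fun h => hyb (by simp [bv, h])) hyU
      refine ⟨psa ++ psb, ?_, ?_⟩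
      · intro p hp
        rcases List.mem_append.1 hp with h | h
        exacts [hpa p h, hpb p h]
      · intro F g
        simp only [holds, hea F g, heb F g]
        constructor
        · rintro (⟨p, hp, h⟩ | ⟨p, hp, h⟩)
          · exact ⟨p, List.mem_append.2 (Or.inl hp), h⟩
          · exact ⟨p, List.mem_append.2 (Or.inr hp), h⟩
        · rintro ⟨p, hp, h⟩
          rcases List.mem_append.1 hp with h' | h'
          exacts [Or.inl ⟨p, h', h⟩, Or.inr ⟨p, h', h⟩]
  | all z l v γ ih =>
      intro y hne hqs hev hsc hbv hyb hyU
      obtain ⟨hvz, hvb, hzb, hsγ⟩ := hsc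
      have hzbv : z ∈ bv (KrF.all z l v γ) := by simp [bv]
      have hzU : z ∉ U := hbv z hzbv
      obtain ⟨ps', hp', he'⟩ := ih z hne hqs hev hsγ
        (fun u hu => hbv u (by simp [bv, hu])) hzb hzU
      have hyz : y ≠ z := by
        intro h; exact hyb (by simp [bv, h])
      -- raw list of atoms for a sublist T
      set raw : List (List (ℕ × LExp Λ) × LExp Λ) → List (ℕ × LExp Λ) :=
        fun T => (T.flatMap Prod.fst) ++ [(v, .rbox l (unionList (T.map Prod.snd)))] with hraw
      refine ⟨ps'.sublists.map (fun T => absorb y (raw T)), ?_, ?_⟩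
      · intro p hp
        simp only [List.mem_map] at hp
        obtain ⟨T, hT, rfl⟩ := hp
        have hTsub : ∀ p' ∈ T, p' ∈ ps' := (List.mem_sublists.1 hT).subset
        have hrawOk : ∀ q ∈ raw T, QuasiSafe q.2 ∧ LExp.evars q.2 ⊆ U := by
          intro q hq
          simp only [hraw, List.mem_append, List.mem_flatMap, List.mem_singleton] at hq
          rcases hq with ⟨p', hp'T, hq⟩ | rfl
          · obtain ⟨_, _, h3⟩ := hp' p' (hTsub p' hp'T)
            obtain ⟨_, h2, h3'⟩ := h3 q hq
            exact ⟨h2, h3'⟩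
          · refine ⟨QuasiSafe.rbox l (quasiSafe_unionList ?_), ?_⟩
            · intro E hE
              simp only [List.mem_map] at hE
              obtain ⟨p', hp'T, rfl⟩ := hE
              exact (hp' p' (hTsub p' hp'T)).1
            · simp only [LExp.evars]
              apply evars_unionList
              intro E hE
              simp only [List.mem_map] at hE
              obtain ⟨p', hp'T, rfl⟩ := hE
              exact (hp' p' (hTsub p' hp'T)).2.1
        refine ⟨?_, ?_, ?_⟩
        · apply quasiSafe_interList
          intro E hE
          simp only [absorb, List.mem_map, List.mem_filter] at hE
          obtain ⟨q, ⟨hq, _⟩, rfl⟩ := hE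
          exact (hrawOk q hq).1
        · apply evars_interList
          intro E hE
          simp only [absorb, List.mem_map, List.mem_filter] at hE
          obtain ⟨q, ⟨hq, _⟩, rfl⟩ := hE
          exact (hrawOk q hq).2
        · intro q hq
          simp only [absorb, List.mem_filter, decide_eq_true_eq] at hq
          exact ⟨hq.2, (hrawOk q hq.1).1, (hrawOk q hq.1).2⟩
      · intro F g
        have key : holds F g (KrF.all z l v γ) ↔
            ∃ T ∈ ps'.sublists, ∀ q ∈ raw T, g q.1 ∈ LExp.den F g q.2 := by
          have step1 : holds F g (KrF.all z l v γ) ↔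
              ∀ w, F.R l (g v) w →
                ∃ p ∈ ps', (∀ q ∈ p.1, g q.1 ∈ LExp.den F g q.2) ∧
                  w ∈ LExp.den F g p.2 := by
            simp only [holds]
            apply forall_congr'
            intro w
            apply imp_congr_right
            intro _
            rw [he' F (Function.update g z w)]
            apply exists_congr
            intro p
            apply and_congr_right
            intro hp
            obtain ⟨_, hpev, hpq⟩ := hp' p hp
            unfold pairHolds
            rw [Function.update_self,
              den_update F g z w p.2 (fun h => hzU (hpev h))]
            apply and_congr_left
            intro _
            apply forall_congr'
            intro q
            apply forall_congr'
            intro hq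
            obtain ⟨hq1, _, hq3⟩ := hpq q hq
            rw [Function.update_of_ne hq1,
              den_update F g z w q.2 (fun h => hzU (hq3 h))]
          rw [step1, subset_trick ps'
            (fun p => ∀ q ∈ p.1, g q.1 ∈ LExp.den F g q.2)
            (fun w => F.R l (g v) w) (fun p w => w ∈ LExp.den F g p.2)]
          apply exists_congr
          intro T
          apply and_congr_right
          intro _
          constructor
          · rintro ⟨hC, hA⟩ q hq
            simp only [hraw, List.mem_append, List.mem_flatMap,
              List.mem_singleton] at hq
            rcases hq with ⟨p', hp'T, hq⟩ | rfl
            · exact hC p' hp'T q hq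
            · simp only [LExp.den, Rinv, RboxOp, Set.mem_setOf_eq]
              intro w hw
              obtain ⟨p', hp'T, hm⟩ := hA w hw
              rw [den_unionList]
              exact ⟨p'.2, List.mem_map.2 ⟨p', hp'T, rfl⟩, hm⟩
          · intro h
            constructor
            · intro p' hp'T q hq
              apply h q
              simp only [hraw, List.mem_append, List.mem_flatMap]
              exact Or.inl ⟨p', hp'T, hq⟩
            · intro w hw
              have := h (v, .rbox l (unionList (T.map Prod.snd)))
                (by simp [hraw])
              simp only [LExp.den, RboxOp, Set.mem_setOf_eq] at this
              have := this w hw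
              rw [den_unionList] at this
              obtain ⟨E, hE, hm⟩ := this
              obtain ⟨p', hp'T, rfl⟩ := List.mem_map.1 hE
              exact ⟨p', hp'T, hm⟩
        rw [key]
        constructor
        · rintro ⟨T, hT, h⟩
          exact ⟨absorb y (raw T), List.mem_map.2 ⟨T, hT, rfl⟩,
            (absorb_sem F g y (raw T)).1 h⟩
        · rintro ⟨p, hp, h⟩
          obtain ⟨T, hT, rfl⟩ := List.mem_map.1 hp
          exact ⟨T, hT, (absorb_sem F g y (raw T)).2 h⟩
  | ex y' l x γ ih =>
      intro y hne
      exact absurd hne (by simp [NoEx])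

/-- Conjunction of a list of atoms (empty is a trivially true atom). -/
def conjP {Λ : Type u} : List (ℕ × LExp Λ) → KrF Λ
  | [] => .atom 0 .top
  | q :: qs => .and (.atom q.1 q.2) (conjP qs)

/-- Disjunction of a list of formulas (empty is a trivially false atom). -/
def disjK {Λ : Type u} : List (KrF Λ) → KrF Λ
  | [] => .atom 0 .bot
  | c :: cs => .or c (disjK cs)

lemma conjP_holds {Λ : Type u} (F : Frame Λ) (g : ℕ → F.W) :
    ∀ L : List (ℕ × LExp Λ),
      holds F g (conjP L) ↔ ∀ q ∈ L, g q.1 ∈ LExp.den F g q.2 := by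
  intro L; induction L with
  | nil => simp [conjP, holds, LExp.den]
  | cons q qs ih => simp [conjP, holds, ih]

lemma disjK_holds {Λ : Type u} (F : Frame Λ) (g : ℕ → F.W) :
    ∀ L : List (KrF Λ), holds F g (disjK L) ↔ ∃ c ∈ L, holds F g c := by
  intro L; induction L with
  | nil => simp [disjK, holds, LExp.den]
  | cons c cs ih => simp [disjK, holds, ih]

lemma conjP_props {Λ : Type u} (P : LExp Λ → Prop) (hP : P .top) :
    ∀ L : List (ℕ × LExp Λ), (∀ q ∈ L, P q.2) →
      NoEx (conjP L) ∧ Scoped (conjP L) ∧ bv (conjP L) = ∅ ∧ AtomsAll P (conjP L) := by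
  intro L; induction L with
  | nil => intro _; exact ⟨trivial, trivial, rfl, hP⟩
  | cons q qs ih =>
      intro h
      obtain ⟨h1, h2, h3, h4⟩ := ih (fun q' hq' => h q' (by simp [hq']))
      refine ⟨⟨trivial, h1⟩, ⟨trivial, h2⟩, ?_, ⟨h q (by simp), h4⟩⟩
      simp [conjP, bv, h3]

lemma disjK_props {Λ : Type u} (P : LExp Λ → Prop) (hP : P .bot) :
    ∀ L : List (KrF Λ),
      (∀ c ∈ L, NoEx c ∧ Scoped c ∧ bv c = ∅ ∧ AtomsAll P c) →
      NoEx (disjK L) ∧ Scoped (disjK L) ∧ bv (disjK L) = ∅ ∧ AtomsAll P (disjK L) := by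
  intro L; induction L with
  | nil => intro _; exact ⟨trivial, trivial, rfl, hP⟩
  | cons c cs ih =>
      intro h
      obtain ⟨h1, h2, h3, h4⟩ := ih (fun c' hc' => h c' (by simp [hc']))
      obtain ⟨g1, g2, g3, g4⟩ := h c (by simp)
      refine ⟨⟨g1, h1⟩, ⟨g2, h2⟩, ?_, ⟨g4, h4⟩⟩
      simp [disjK, bv, h3, g3]

/-- The main lemma: elimination of restricted existential quantifiers from a generalized
Kracht formula, by induction on the formula. -/
lemma mainLem {Λ : Type u} :
    ∀ (φ : KrF Λ) (U : Set ℕ) (e : Bool),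
      AtomsAll QuasiSafe φ → Scoped φ → GKok U e φ → (∀ v ∈ bv φ, v ∉ U) →
      ∃ β : KrF Λ, NoEx β ∧ AtomsAll QuasiSafe β ∧ Scoped β ∧
        (∀ v ∈ bv β, v ∈ bv φ) ∧
        (e = true → AtomsAll (fun E => LExp.evars E ⊆ U) β) ∧
        ∀ (F : Frame Λ) (g : ℕ → F.W), holds F g φ ↔ holds F g β := by
  intro φ
  induction φ with
  | atom s E =>
      intro U e h1 h2 h3 _
      refine ⟨.atom s E, trivial, h1, trivial, fun v hv => hv, ?_, fun F g => Iff.rfl⟩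
      intro he
      subst he
      exact h3
  | and a b iha ihb =>
      intro U e h1 h2 h3 h4
      have h3ab : GKok U e a ∧ GKok U e b := by cases e <;> exact h3
      obtain ⟨βa, g1, g2, g3, g4, g5, g6⟩ := iha U e h1.1 h2.1 h3ab.1
        (fun v hv => h4 v (by simp [bv, hv]))
      obtain ⟨βb, k1, k2, k3, k4, k5, k6⟩ := ihb U e h1.2 h2.2 h3ab.2
        (fun v hv => h4 v (by simp [bv, hv]))
      refine ⟨.and βa βb, ⟨g1, k1⟩, ⟨g2, k2⟩, ⟨g3, k3⟩, ?_, ?_, ?_⟩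
      · intro v hv
        simp only [bv, Set.mem_union] at hv ⊢
        rcases hv with h | h
        exacts [Or.inl (g4 v h), Or.inr (k4 v h)]
      · intro he; exact ⟨g5 he, k5 he⟩
      · intro F g
        simp only [holds, g6 F g, k6 F g]
  | or a b iha ihb =>
      intro U e h1 h2 h3 h4
      have h3ab : GKok U e a ∧ GKok U e b := by cases e <;> exact h3
      obtain ⟨βa, g1, g2, g3, g4, g5, g6⟩ := iha U e h1.1 h2.1 h3ab.1
        (fun v hv => h4 v (by simp [bv, hv]))
      obtain ⟨βb, k1, k2, k3, k4, k5, k6⟩ := ihb U e h1.2 h2.2 h3ab.2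
        (fun v hv => h4 v (by simp [bv, hv]))
      refine ⟨.or βa βb, ⟨g1, k1⟩, ⟨g2, k2⟩, ⟨g3, k3⟩, ?_, ?_, ?_⟩
      · intro v hv
        simp only [bv, Set.mem_union] at hv ⊢
        rcases hv with h | h
        exacts [Or.inl (g4 v h), Or.inr (k4 v h)]
      · intro he; exact ⟨g5 he, k5 he⟩
      · intro F g
        simp only [holds, g6 F g, k6 F g]
  | all y l x β ih =>
      intro U e h1 h2 h3 h4
      obtain ⟨hxy, hxb, hyb, hsβ⟩ := h2
      have hybv : y ∈ bv (KrF.all y l x β) := by simp [bv]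
      cases e with
      | false =>
          have h3' : GKok (insert y U) false β := h3
          obtain ⟨β', g1, g2, g3, g4, _, g6⟩ := ih (insert y U) false h1 hsβ h3'
            (by
              intro v hv
              simp only [Set.mem_insert_iff, not_or]
              exact ⟨fun h => hyb (h ▸ hv), h4 v (by simp [bv, hv])⟩)
          refine ⟨.all y l x β', g1, g2,
            ⟨hxy, fun h => hxb (g4 x h), fun h => hyb (g4 y h), g3⟩, ?_, ?_, ?_⟩
          · intro v hv
            simp only [bv, Set.mem_insert_iff] at hv ⊢
            rcases hv with h | h
            exacts [Or.inl h, Or.inr (g4 v h)]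
          · intro he; exact absurd he (by simp)
          · intro F g
            simp only [holds]
            exact forall_congr' fun w => imp_congr_right fun _ =>
              g6 F (Function.update g y w)
      | true =>
          have h3' : GKok U true β := h3
          obtain ⟨β', g1, g2, g3, g4, g5, g6⟩ := ih U true h1 hsβ h3'
            (fun v hv => h4 v (by simp [bv, hv]))
          refine ⟨.all y l x β', g1, g2,
            ⟨hxy, fun h => hxb (g4 x h), fun h => hyb (g4 y h), g3⟩, ?_, ?_, ?_⟩
          · intro v hv
            simp only [bv, Set.mem_insert_iff] at hv ⊢
            rcases hv with h | h
            exacts [Or.inl h, Or.inr (g4 v h)]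
          · intro _; exact g5 rfl
          · intro F g
            simp only [holds]
            exact forall_congr' fun w => imp_congr_right fun _ =>
              g6 F (Function.update g y w)
  | ex y l x β ih =>
      intro U e h1 h2 h3 h4
      obtain ⟨hxy, hxb, hyb, hsβ⟩ := h2
      have hyU : y ∉ U := h4 y (by simp [bv])
      have h3' : GKok U true β := by
        cases e <;> exact h3
      obtain ⟨β', g1, g2, g3, g4, g5, g6⟩ := ih U true h1 hsβ h3'
        (fun v hv => h4 v (by simp [bv, hv]))
      obtain ⟨ps, hps, hsem⟩ := dnfLem U β' y g1 g2 (g5 rfl) g3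
        (fun v hv => h4 v (by simp [bv, g4 v hv]))
        (fun h => hyb (g4 y h)) hyU
      set β₀ : KrF Λ :=
        disjK (ps.map fun p => .and (conjP p.1) (.atom x (.rinv l p.2))) with hβ₀
      have hd := disjK_props (Λ := Λ) (fun E => QuasiSafe E ∧ LExp.evars E ⊆ U)
        ⟨QuasiSafe.bot, by simp [LExp.evars]⟩
        (ps.map fun p => .and (conjP p.1) (.atom x (.rinv l p.2)))
        (by
          intro c hc
          simp only [List.mem_map] at hc
          obtain ⟨p, hp, rfl⟩ := hc
          obtain ⟨k1, k2, k3⟩ := hps p hp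
          obtain ⟨c1, c2, c3, c4⟩ := conjP_props (fun E => QuasiSafe E ∧ LExp.evars E ⊆ U)
            ⟨QuasiSafe.top, by simp [LExp.evars]⟩ p.1
            (fun q hq => ⟨(k3 q hq).2.1, (k3 q hq).2.2⟩)
          refine ⟨⟨c1, trivial⟩, ⟨c2, trivial⟩, ?_, c4, QuasiSafe.rinv l k1, k2⟩
          simp [bv, c3])
      refine ⟨β₀, hd.1, atomsAll_mono (fun E hE => hE.1) β₀ hd.2.2.2, hd.2.1, ?_, ?_, ?_⟩
      · intro v hv
        rw [hd.2.2.1] at hv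
        exact absurd hv (Set.notMem_empty v)
      · intro _
        exact atomsAll_mono (fun E hE => hE.2) β₀ hd.2.2.2
      · intro F g
        have main : holds F g (KrF.ex y l x β) ↔
            ∃ p ∈ ps, (∀ q ∈ p.1, g q.1 ∈ LExp.den F g q.2) ∧
              ∃ w, F.R l (g x) w ∧ w ∈ LExp.den F g p.2 := by
          simp only [holds]
          constructor
          · rintro ⟨w, hw, hb⟩
            rw [g6 F (Function.update g y w), hsem F (Function.update g y w)] at hb
            obtain ⟨p, hp, hC, hm⟩ := hb
            obtain ⟨k1, k2, k3⟩ := hps p hp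
            refine ⟨p, hp, ?_, w, hw, ?_⟩
            · intro q hq
              have := hC q hq
              rwa [Function.update_of_ne (k3 q hq).1,
                den_update F g y w q.2 (fun h => hyU ((k3 q hq).2.2 h))] at this
            · have := hm
              rwa [Function.update_self,
                den_update F g y w p.2 (fun h => hyU (k2 h))] at this
          · rintro ⟨p, hp, hC, w, hw, hm⟩
            obtain ⟨k1, k2, k3⟩ := hps p hp
            refine ⟨w, hw, ?_⟩
            rw [g6 F (Function.update g y w), hsem F (Function.update g y w)]
            refine ⟨p, hp, ?_, ?_⟩
            · intro q hq
              rw [Function.update_of_ne (k3 q hq).1,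
                den_update F g y w q.2 (fun h => hyU ((k3 q hq).2.2 h))]
              exact hC q hq
            · rw [Function.update_self,
                den_update F g y w p.2 (fun h => hyU (k2 h))]
              exact hm
        rw [main, hβ₀, disjK_holds]
        constructor
        · rintro ⟨p, hp, hC, hm⟩
          refine ⟨.and (conjP p.1) (.atom x (.rinv l p.2)),
            List.mem_map.2 ⟨p, hp, rfl⟩, ?_, ?_⟩
          · exact (conjP_holds F g p.1).2 hC
          · exact hm
        · rintro ⟨c, hc, hcc⟩
          obtain ⟨p, hp, rfl⟩ := List.mem_map.1 hc
          exact ⟨p, hp, (conjP_holds F g p.1).1 hcc.1, hcc.2⟩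

end S18

/-- every generalized Kracht formula is equivalent, in every Kripke frame,
to a first-order formula obtained from quasi-safe atoms using only conjunction, disjunction
and restricted universal quantification. -/
theorem statement18 {Λ : Type u} (α : KrF Λ) (x₀ : ℕ) (hα : IsGenKracht α x₀) :
    ∃ β : KrF Λ, β.NoEx ∧ β.AtomsAll QuasiSafe ∧
      ∀ (F : Frame Λ) (g : ℕ → F.W), KrF.holds F g α ↔ KrF.holds F g β := by
  obtain ⟨⟨hclean, hsafe, hgk⟩, hfv⟩ := hα
  obtain ⟨β, h1, h2, _, _, _, h6⟩ := S18.mainLem α (KrF.fv α) false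
    (S18.atomsAll_mono (fun E hE => QuasiSafe.safe hE) α hsafe)
    (S18.scoped_of_clean α hclean.2 hclean.1) hgk
    (by
      intro v hv hvU
      have : v ∈ KrF.fv α ∩ KrF.bv α := ⟨hvU, hv⟩
      rw [hclean.1] at this
      exact this)
  exact ⟨β, h1, h2, h6⟩
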